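/- Let τ₀ be a densely defined, accretive, continuous, closed bilinear form on L₂(m), and let j ≥ 0 be measurable on Ω×Ω. Then the perturbed form τ(u,v) = τ₀(u,v) + ∫∫ (u(x)−u(y))(v(x)−v(y)) j(x,y) dm² on D(τ) = {u ∈ D(τ₀) : ∫∫ (u(x)−u(y))² j dm² < ∞} is closed: if (uₙ) ⊆ D(τ) is Cauchy with respect to the form norm ‖·‖_τ and uₙ → u in L₂(m), then u ∈ D(τ) and ‖uₙ − u‖_τ → 0. -/

import Mathlib

open MeasureTheory Filter Topology Set
open scoped ENNReal

lemma prod_null_fst {α β : Type*} [MeasurableSpace α] [MeasurableSpace β]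
    (μ : Measure α) (ν : Measure β) {N : Set α} (hN : μ N = 0) :
    μ.prod ν (Prod.fst ⁻¹' N) = 0 := by
  obtain ⟨N', hNN', hN'm, hN'0⟩ := exists_measurable_superset_of_null hN
  refine measure_mono_null (preimage_mono hNN') ?_
  rw [Measure.prod]
  by_cases h : AEMeasurable (fun x : α => Measure.map (Prod.mk x) ν) μ
  · rw [Measure.bind, Measure.join_apply (hN'm.preimage measurable_fst),
      lintegral_map' (Measure.measurable_coe (hN'm.preimage measurable_fst)).aemeasurable h]
    have h2 : ∀ᵐ x ∂μ, Measure.map (Prod.mk x) ν (Prod.fst ⁻¹' N') = 0 := by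
      filter_upwards [measure_eq_zero_iff_ae_notMem.mp hN'0] with x hx
      rw [Measure.map_apply measurable_prodMk_left (hN'm.preimage measurable_fst)]
      have he : (Prod.mk x ⁻¹' (Prod.fst ⁻¹' N') : Set β) = ∅ := by
        ext y; simp [hx]
      simp [he]
    rw [lintegral_congr_ae h2]; simp
  · rw [Measure.bind, Measure.map_of_not_aemeasurable h, Measure.join_zero]; rfl

lemma prod_null_snd {α β : Type*} [MeasurableSpace α] [MeasurableSpace β]
    (μ : Measure α) (ν : Measure β) {N : Set β} (hN : ν N = 0) :
    μ.prod ν (Prod.snd ⁻¹' N) = 0 := by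
  obtain ⟨N', hNN', hN'm, hN'0⟩ := exists_measurable_superset_of_null hN
  refine measure_mono_null (preimage_mono hNN') ?_
  rw [Measure.prod]
  by_cases h : AEMeasurable (fun x : α => Measure.map (Prod.mk x) ν) μ
  · rw [Measure.bind, Measure.join_apply (hN'm.preimage measurable_snd),
      lintegral_map' (Measure.measurable_coe (hN'm.preimage measurable_snd)).aemeasurable h]
    have h2 : ∀ᵐ x ∂μ, Measure.map (Prod.mk x) ν (Prod.snd ⁻¹' N') = 0 := by
      refine ae_of_all _ fun x => ?_
      rw [Measure.map_apply measurable_prodMk_left (hN'm.preimage measurable_snd)]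
      have he : (Prod.mk x ⁻¹' (Prod.snd ⁻¹' N') : Set β) = N' := by ext y; simp
      rw [he, hN'0]
    rw [lintegral_congr_ae h2]; simp
  · rw [Measure.bind, Measure.map_of_not_aemeasurable h, Measure.join_zero]; rfl

lemma ae_prod_of_ae {α : Type*} [MeasurableSpace α] (μ : Measure α)
    {P : α → Prop} (h : ∀ᵐ x ∂μ, P x) :
    ∀ᵐ z ∂μ.prod μ, P z.1 ∧ P z.2 := by
  have hN : μ {x | ¬ P x} = 0 := h
  have h1 := prod_null_fst μ μ hN
  have h2 := prod_null_snd μ μ hN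
  have : {z : α × α | ¬ (P z.1 ∧ P z.2)} ⊆
      (Prod.fst ⁻¹' {x | ¬ P x}) ∪ (Prod.snd ⁻¹' {x | ¬ P x}) := by
    intro z hz
    simp only [mem_setOf_eq, not_and_or] at hz
    rcases hz with h | h
    · exact Or.inl h
    · exact Or.inr h
  exact measure_mono_null this (measure_union_null h1 h2)

section Aux
variable {Ω : Type*} [MeasurableSpace Ω] {μ : Measure Ω} {j : Ω × Ω → ℝ}

lemma aem_fst {g : Ω → ℝ} (hg : AEStronglyMeasurable g μ) :
    AEMeasurable (fun z : Ω × Ω => g z.1) (μ.prod μ) := by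
  refine ⟨fun z => hg.mk g z.1, hg.stronglyMeasurable_mk.measurable.comp measurable_fst, ?_⟩
  filter_upwards [ae_prod_of_ae μ hg.ae_eq_mk] with z hz using hz.1

lemma aem_snd {g : Ω → ℝ} (hg : AEStronglyMeasurable g μ) :
    AEMeasurable (fun z : Ω × Ω => g z.2) (μ.prod μ) := by
  refine ⟨fun z => hg.mk g z.2, hg.stronglyMeasurable_mk.measurable.comp measurable_snd, ?_⟩
  filter_upwards [ae_prod_of_ae μ hg.ae_eq_mk] with z hz using hz.2

lemma aem_integrand (hjm : Measurable j) {g : Ω → ℝ} (hg : AEStronglyMeasurable g μ) :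
    AEMeasurable (fun z : Ω × Ω => ENNReal.ofReal ((g z.1 - g z.2) ^ 2 * j z)) (μ.prod μ) :=
  ((((aem_fst hg).sub (aem_snd hg)).pow_const 2).mul hjm.aemeasurable).ennreal_ofReal

lemma fatou_jump (hjm : Measurable j) {g : ℕ → Ω → ℝ} {f : Ω → ℝ}
    (hgm : ∀ k, AEStronglyMeasurable (g k) μ)
    (hconv : ∀ᵐ x ∂μ, Tendsto (fun k => g k x) atTop (𝓝 (f x))) :
    ∫⁻ z, ENNReal.ofReal ((f z.1 - f z.2) ^ 2 * j z) ∂(μ.prod μ) ≤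
      liminf (fun k => ∫⁻ z, ENNReal.ofReal ((g k z.1 - g k z.2) ^ 2 * j z) ∂(μ.prod μ))
        atTop := by
  have key : ∀ᵐ z ∂(μ.prod μ),
      ENNReal.ofReal ((f z.1 - f z.2) ^ 2 * j z) =
        liminf (fun k => ENNReal.ofReal ((g k z.1 - g k z.2) ^ 2 * j z)) atTop := by
    filter_upwards [ae_prod_of_ae μ hconv] with z hz
    have h1 : Tendsto (fun k => ENNReal.ofReal ((g k z.1 - g k z.2) ^ 2 * j z)) atTop
        (𝓝 (ENNReal.ofReal ((f z.1 - f z.2) ^ 2 * j z))) :=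
      (ENNReal.continuous_ofReal.tendsto _).comp
        ((((hz.1.sub hz.2).pow 2).mul_const (j z)))
    exact h1.liminf_eq.symm
  calc ∫⁻ z, ENNReal.ofReal ((f z.1 - f z.2) ^ 2 * j z) ∂(μ.prod μ)
      = ∫⁻ z, liminf (fun k => ENNReal.ofReal ((g k z.1 - g k z.2) ^ 2 * j z)) atTop
          ∂(μ.prod μ) := lintegral_congr_ae key
    _ ≤ _ := lintegral_liminf_le' fun k => aem_integrand hjm (hgm k)

lemma jump_sub_le (hjm : Measurable j) (hj0 : ∀ z, 0 ≤ j z) {b c : Ω → ℝ}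
    (hb : AEStronglyMeasurable b μ) (hc : AEStronglyMeasurable c μ) :
    ∫⁻ z, ENNReal.ofReal (((b z.1 - c z.1) - (b z.2 - c z.2)) ^ 2 * j z) ∂(μ.prod μ) ≤
      2 * ∫⁻ z, ENNReal.ofReal ((b z.1 - b z.2) ^ 2 * j z) ∂(μ.prod μ) +
      2 * ∫⁻ z, ENNReal.ofReal ((c z.1 - c z.2) ^ 2 * j z) ∂(μ.prod μ) := by
  have hpt : ∀ z : Ω × Ω, ENNReal.ofReal (((b z.1 - c z.1) - (b z.2 - c z.2)) ^ 2 * j z) ≤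
      2 * ENNReal.ofReal ((b z.1 - b z.2) ^ 2 * j z) +
      2 * ENNReal.ofReal ((c z.1 - c z.2) ^ 2 * j z) := by
    intro z
    have h1 : ((b z.1 - c z.1) - (b z.2 - c z.2)) ^ 2 * j z ≤
        2 * ((b z.1 - b z.2) ^ 2 * j z) + 2 * ((c z.1 - c z.2) ^ 2 * j z) := by
      nlinarith [hj0 z, sq_nonneg (b z.1 - b z.2 + (c z.1 - c z.2)),
        mul_nonneg (sq_nonneg (b z.1 - b z.2 + (c z.1 - c z.2))) (hj0 z)]
    calc ENNReal.ofReal (((b z.1 - c z.1) - (b z.2 - c z.2)) ^ 2 * j z)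
        ≤ ENNReal.ofReal (2 * ((b z.1 - b z.2) ^ 2 * j z) + 2 * ((c z.1 - c z.2) ^ 2 * j z)) :=
          ENNReal.ofReal_le_ofReal h1
      _ = 2 * ENNReal.ofReal ((b z.1 - b z.2) ^ 2 * j z) +
          2 * ENNReal.ofReal ((c z.1 - c z.2) ^ 2 * j z) := by
          rw [ENNReal.ofReal_add
              (mul_nonneg (by norm_num) (mul_nonneg (sq_nonneg _) (hj0 z)))
              (mul_nonneg (by norm_num) (mul_nonneg (sq_nonneg _) (hj0 z))),
            ENNReal.ofReal_mul (by norm_num : (0:ℝ) ≤ 2),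
            ENNReal.ofReal_mul (by norm_num : (0:ℝ) ≤ 2)]
          norm_num
  calc ∫⁻ z, ENNReal.ofReal (((b z.1 - c z.1) - (b z.2 - c z.2)) ^ 2 * j z) ∂(μ.prod μ)
      ≤ ∫⁻ z, (2 * ENNReal.ofReal ((b z.1 - b z.2) ^ 2 * j z) +
          2 * ENNReal.ofReal ((c z.1 - c z.2) ^ 2 * j z)) ∂(μ.prod μ) := lintegral_mono hpt
    _ = 2 * ∫⁻ z, ENNReal.ofReal ((b z.1 - b z.2) ^ 2 * j z) ∂(μ.prod μ) +
        2 * ∫⁻ z, ENNReal.ofReal ((c z.1 - c z.2) ^ 2 * j z) ∂(μ.prod μ) := by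
        rw [lintegral_add_left' ((aem_integrand hjm hb).const_mul 2) _,
          lintegral_const_mul' _ _ (by simp), lintegral_const_mul' _ _ (by simp)]


lemma exists_subseq_tendsto_ae {un : ℕ → Ω → ℝ} {u : Ω → ℝ}
    (hL2 : ∀ n, MemLp (un n) 2 μ) (huL2 : MemLp u 2 μ)
    (hconv : Tendsto (fun n => ∫ x, (un n x - u x) ^ 2 ∂μ) atTop (𝓝 0)) :
    ∃ ns : ℕ → ℕ, StrictMono ns ∧
      ∀ᵐ x ∂μ, Tendsto (fun k => un (ns k) x) atTop (𝓝 (u x)) := by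
  set E : ℕ → ℝ≥0∞ := fun n => ∫⁻ x, ENNReal.ofReal ((un n x - u x) ^ 2) ∂μ with hE
  have haesm : ∀ n, AEStronglyMeasurable (fun x => un n x - u x) μ :=
    fun n => ((hL2 n).sub huL2).aestronglyMeasurable
  have haem : ∀ n, AEMeasurable (fun x => ENNReal.ofReal ((un n x - u x) ^ 2)) μ :=
    fun n => (((haesm n).aemeasurable).pow_const 2).ennreal_ofReal
  have hEfin : ∀ n, E n ≠ ⊤ := fun n =>
    (Integrable.lintegral_lt_top (((hL2 n).sub huL2).integrable_sq)).ne
  have hEeq : ∀ n, E n = ENNReal.ofReal (∫ x, (un n x - u x) ^ 2 ∂μ) := by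
    intro n
    rw [integral_eq_lintegral_of_nonneg_ae (ae_of_all _ fun x => sq_nonneg _)
      (((haesm n).aemeasurable.pow_const 2).aestronglyMeasurable)]
    exact (ENNReal.ofReal_toReal (hEfin n)).symm
  have hEto : Tendsto E atTop (𝓝 0) := by
    have h := (ENNReal.continuous_ofReal.tendsto 0).comp hconv
    simp only [Function.comp_def, ENNReal.ofReal_zero] at h
    exact h.congr fun n => (hEeq n).symm
  have hTIM : TendstoInMeasure μ un atTop u := by
    rw [tendstoInMeasure_iff_dist]
    intro ε hε
    have hc : ENNReal.ofReal (ε ^ 2) ≠ 0 := by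
      simp only [ne_eq, ENNReal.ofReal_eq_zero, not_le]
      positivity
    have hb : ∀ n, μ {x | ε ≤ dist (un n x) (u x)} ≤ E n / ENNReal.ofReal (ε ^ 2) := by
      intro n
      refine le_trans (measure_mono ?_)
        (meas_ge_le_lintegral_div (haem n) hc (by simp))
      intro x hx
      simp only [mem_setOf_eq] at hx ⊢
      refine ENNReal.ofReal_le_ofReal ?_
      have hx' : ε ≤ |un n x - u x| := by rwa [Real.dist_eq] at hx
      calc ε ^ 2 ≤ |un n x - u x| ^ 2 := by nlinarith [abs_nonneg (un n x - u x)]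
        _ = (un n x - u x) ^ 2 := sq_abs _
    have hdiv : Tendsto (fun n => E n / ENNReal.ofReal (ε ^ 2)) atTop (𝓝 0) := by
      have h := ENNReal.Tendsto.const_mul
        (a := (ENNReal.ofReal (ε ^ 2))⁻¹) hEto (Or.inr (ENNReal.inv_ne_top.mpr hc))
      simp only [mul_zero] at h
      exact h.congr fun n => by rw [ENNReal.div_eq_inv_mul]
    exact tendsto_of_tendsto_of_tendsto_of_le_of_le tendsto_const_nhds hdiv
      (fun n => zero_le) hb
  exact hTIM.exists_seq_tendsto_ae

end Aux
/-- Closedness of the perturbed form `τ = τ₀ + τ_j`. -/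
theorem perturbed_form_closed
    {Ω : Type*} [MeasurableSpace Ω] (μ : Measure Ω)
    (D₀ : Set (Ω → ℝ)) (τ₀ : (Ω → ℝ) → (Ω → ℝ) → ℝ)
    (hD₀L2 : ∀ u ∈ D₀, MemLp u 2 μ)
    (haccr : ∀ u ∈ D₀, 0 ≤ τ₀ u u)
    (hsub : ∀ u ∈ D₀, ∀ v ∈ D₀, u - v ∈ D₀)
    -- closedness of `τ₀`: `(D(τ₀), ‖·‖_{τ₀})` is complete
    (hclosed : ∀ (v : ℕ → Ω → ℝ) (w : Ω → ℝ), (∀ n, v n ∈ D₀) →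
      (∀ ε > 0, ∃ N : ℕ, ∀ m ≥ N, ∀ n ≥ N,
        Real.sqrt (τ₀ (v m - v n) (v m - v n) + ∫ x, (v m x - v n x) ^ 2 ∂μ) < ε) →
      MemLp w 2 μ →
      Tendsto (fun n => ∫ x, (v n x - w x) ^ 2 ∂μ) atTop (nhds 0) →
      w ∈ D₀ ∧
        Tendsto (fun n =>
          Real.sqrt (τ₀ (v n - w) (v n - w) + ∫ x, (v n x - w x) ^ 2 ∂μ))
          atTop (nhds 0))
    (j : Ω × Ω → ℝ) (hjm : Measurable j) (hj0 : ∀ z, 0 ≤ j z)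
    -- a sequence in `D(τ)`, `‖·‖_τ`-Cauchy, converging to `u` in `L₂(m)`
    (un : ℕ → Ω → ℝ) (u : Ω → ℝ)
    (hmem : ∀ n, un n ∈ D₀)
    (hfin : ∀ n, (∫⁻ z : Ω × Ω,
      ENNReal.ofReal ((un n z.1 - un n z.2) ^ 2 * j z) ∂(μ.prod μ)) < ⊤)
    (hcauchy : ∀ ε > 0, ∃ N : ℕ, ∀ m ≥ N, ∀ n ≥ N,
      Real.sqrt (τ₀ (un m - un n) (un m - un n) +
        (∫⁻ z : Ω × Ω,
          ENNReal.ofReal ((un m z.1 - un n z.1 - (un m z.2 - un n z.2)) ^ 2 * j z)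
          ∂(μ.prod μ)).toReal +
        ∫ x, (un m x - un n x) ^ 2 ∂μ) < ε)
    (huL2 : MemLp u 2 μ)
    (hconv : Tendsto (fun n => ∫ x, (un n x - u x) ^ 2 ∂μ) atTop (nhds 0)) :
    u ∈ D₀ ∧
      (∫⁻ z : Ω × Ω,
        ENNReal.ofReal ((u z.1 - u z.2) ^ 2 * j z) ∂(μ.prod μ)) < ⊤ ∧
      Tendsto (fun n =>
        Real.sqrt (τ₀ (un n - u) (un n - u) +
          (∫⁻ z : Ω × Ω,
            ENNReal.ofReal ((un n z.1 - u z.1 - (un n z.2 - u z.2)) ^ 2 * j z)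
            ∂(μ.prod μ)).toReal +
          ∫ x, (un n x - u x) ^ 2 ∂μ)) atTop (nhds 0) := by
  have hL2 : ∀ n, MemLp (un n) 2 μ := fun n => hD₀L2 _ (hmem n)
  have haesm : ∀ n, AEStronglyMeasurable (un n) μ := fun n => (hL2 n).aestronglyMeasurable
  have huaesm : AEStronglyMeasurable u μ := huL2.aestronglyMeasurable
  -- Step 1: the sequence is Cauchy for the `τ₀`-form norm
  have hcau0 : ∀ ε > 0, ∃ N : ℕ, ∀ m ≥ N, ∀ n ≥ N,
      Real.sqrt (τ₀ (un m - un n) (un m - un n) + ∫ x, (un m x - un n x) ^ 2 ∂μ) < ε := by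
    intro ε hε
    obtain ⟨N, hN⟩ := hcauchy ε hε
    refine ⟨N, fun m hm n hn => lt_of_le_of_lt (Real.sqrt_le_sqrt ?_) (hN m hm n hn)⟩
    have h0 := ENNReal.toReal_nonneg (a := ∫⁻ z : Ω × Ω,
      ENNReal.ofReal ((un m z.1 - un n z.1 - (un m z.2 - un n z.2)) ^ 2 * j z) ∂(μ.prod μ))
    linarith
  obtain ⟨huD₀, hτ₀tend⟩ := hclosed un u hmem hcau0 huL2 hconv
  -- finiteness of the jump integral of pairwise differences
  have hfinsub : ∀ a b : ℕ, (∫⁻ z : Ω × Ω,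
      ENNReal.ofReal ((un a z.1 - un b z.1 - (un a z.2 - un b z.2)) ^ 2 * j z)
      ∂(μ.prod μ)) ≠ ⊤ := by
    intro a b
    have hle := jump_sub_le (μ := μ) hjm hj0 (haesm a) (haesm b)
    refine ne_top_of_le_ne_top (ENNReal.add_ne_top.mpr
      ⟨ENNReal.mul_ne_top (by simp) (hfin a).ne, ENNReal.mul_ne_top (by simp) (hfin b).ne⟩) hle
  -- a.e. convergent subsequence
  obtain ⟨ns, hns_mono, hns_ae⟩ := exists_subseq_tendsto_ae hL2 huL2 hconv
  have hns_ge : ∀ k, k ≤ ns k := fun k => hns_mono.le_apply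
  -- Step 2 (Fatou): key estimate for the jump part of `un n - u`
  have hkey : ∀ ε : ℝ, 0 < ε → ∃ N : ℕ, ∀ n ≥ N,
      (∫⁻ z : Ω × Ω,
        ENNReal.ofReal ((un n z.1 - u z.1 - (un n z.2 - u z.2)) ^ 2 * j z)
        ∂(μ.prod μ)) ≤ ENNReal.ofReal (ε ^ 2) := by
    intro ε hε
    obtain ⟨N, hN⟩ := hcauchy ε hε
    refine ⟨N, fun n hn => ?_⟩
    have hconv_ae : ∀ᵐ x ∂μ, Tendsto (fun k => un n x - un (ns k) x) atTop
        (𝓝 (un n x - u x)) := by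
      filter_upwards [hns_ae] with x hx
      exact tendsto_const_nhds.sub hx
    have hF : (∫⁻ z : Ω × Ω,
        ENNReal.ofReal ((un n z.1 - u z.1 - (un n z.2 - u z.2)) ^ 2 * j z) ∂(μ.prod μ)) ≤
        liminf (fun k => ∫⁻ z : Ω × Ω,
          ENNReal.ofReal ((un n z.1 - un (ns k) z.1 - (un n z.2 - un (ns k) z.2)) ^ 2 * j z)
          ∂(μ.prod μ)) atTop :=
      fatou_jump (μ := μ) hjm (g := fun k => fun x => un n x - un (ns k) x)
        (f := fun x => un n x - u x)
        (fun k => (haesm n).sub (haesm (ns k))) hconv_ae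
    refine le_trans hF ?_
    have hbound : ∀ᶠ k in atTop, (∫⁻ z : Ω × Ω,
        ENNReal.ofReal ((un n z.1 - un (ns k) z.1 - (un n z.2 - un (ns k) z.2)) ^ 2 * j z)
        ∂(μ.prod μ)) ≤ ENNReal.ofReal (ε ^ 2) := by
      filter_upwards [eventually_ge_atTop N] with k hk
      have hk' : N ≤ ns k := hk.trans (hns_ge k)
      have hs := hN n hn (ns k) hk'
      have h1 : 0 ≤ τ₀ (un n - un (ns k)) (un n - un (ns k)) :=
        haccr _ (hsub _ (hmem n) _ (hmem (ns k)))
      have h2 : 0 ≤ ∫ x, (un n x - un (ns k) x) ^ 2 ∂μ :=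
        integral_nonneg fun x => sq_nonneg _
      have hsum := (Real.sqrt_lt' hε).mp hs
      have h4 : (∫⁻ z : Ω × Ω,
          ENNReal.ofReal ((un n z.1 - un (ns k) z.1 - (un n z.2 - un (ns k) z.2)) ^ 2 * j z)
          ∂(μ.prod μ)).toReal ≤ ε ^ 2 := by linarith
      calc (∫⁻ z : Ω × Ω,
          ENNReal.ofReal ((un n z.1 - un (ns k) z.1 - (un n z.2 - un (ns k) z.2)) ^ 2 * j z)
          ∂(μ.prod μ))
          = ENNReal.ofReal ((∫⁻ z : Ω × Ω,
            ENNReal.ofReal ((un n z.1 - un (ns k) z.1 - (un n z.2 - un (ns k) z.2)) ^ 2 * j z)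
            ∂(μ.prod μ)).toReal) := (ENNReal.ofReal_toReal (hfinsub n (ns k))).symm
        _ ≤ ENNReal.ofReal (ε ^ 2) := ENNReal.ofReal_le_ofReal h4
    calc liminf (fun k => ∫⁻ z : Ω × Ω,
          ENNReal.ofReal ((un n z.1 - un (ns k) z.1 - (un n z.2 - un (ns k) z.2)) ^ 2 * j z)
          ∂(μ.prod μ)) atTop
        ≤ liminf (fun _ : ℕ => ENNReal.ofReal (ε ^ 2)) atTop := liminf_le_liminf hbound
      _ = ENNReal.ofReal (ε ^ 2) := liminf_const _
  -- Step 3: finiteness of the jump integral of `u`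
  obtain ⟨N₁, hN₁⟩ := hkey 1 one_pos
  have hfinNu : (∫⁻ z : Ω × Ω,
      ENNReal.ofReal ((un N₁ z.1 - u z.1 - (un N₁ z.2 - u z.2)) ^ 2 * j z)
      ∂(μ.prod μ)) ≠ ⊤ :=
    ne_top_of_le_ne_top (by simp) (hN₁ N₁ le_rfl)
  have hJu : (∫⁻ z : Ω × Ω,
      ENNReal.ofReal ((u z.1 - u z.2) ^ 2 * j z) ∂(μ.prod μ)) < ⊤ := by
    have hle := jump_sub_le (μ := μ) hjm hj0 (haesm N₁)
      (b := un N₁) (c := fun x => un N₁ x - u x) ((haesm N₁).sub huaesm)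
    have hEq : (∫⁻ z : Ω × Ω,
        ENNReal.ofReal ((u z.1 - u z.2) ^ 2 * j z) ∂(μ.prod μ)) =
        ∫⁻ z : Ω × Ω, ENNReal.ofReal
          ((un N₁ z.1 - (un N₁ z.1 - u z.1) - (un N₁ z.2 - (un N₁ z.2 - u z.2))) ^ 2 * j z)
          ∂(μ.prod μ) := by
      refine lintegral_congr fun z => ?_
      congr 1
      ring
    rw [hEq]
    refine lt_of_le_of_lt hle ?_
    refine ENNReal.add_lt_top.mpr ⟨?_, ?_⟩
    · exact ENNReal.mul_lt_top (by simp) (hfin N₁)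
    · exact ENNReal.mul_lt_top (by simp) (lt_of_le_of_lt (hN₁ N₁ le_rfl) (by simp))
  refine ⟨huD₀, hJu, ?_⟩
  -- Step 4: the jump part of `un n - u` tends to `0`
  have hBto : Tendsto (fun n => (∫⁻ z : Ω × Ω,
      ENNReal.ofReal ((un n z.1 - u z.1 - (un n z.2 - u z.2)) ^ 2 * j z)
      ∂(μ.prod μ)).toReal) atTop (𝓝 0) := by
    rw [Metric.tendsto_atTop]
    intro ε hε
    obtain ⟨N, hN⟩ := hkey (Real.sqrt (ε / 2)) (Real.sqrt_pos.mpr (by linarith))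
    refine ⟨N, fun n hn => ?_⟩
    have h1 := hN n hn
    rw [Real.sq_sqrt (by linarith : (0:ℝ) ≤ ε / 2)] at h1
    have h2 : (∫⁻ z : Ω × Ω,
        ENNReal.ofReal ((un n z.1 - u z.1 - (un n z.2 - u z.2)) ^ 2 * j z)
        ∂(μ.prod μ)).toReal ≤ ε / 2 := by
      have h3 := ENNReal.toReal_mono (by simp) h1
      rwa [ENNReal.toReal_ofReal (by linarith)] at h3
    have h3 : 0 ≤ (∫⁻ z : Ω × Ω,
        ENNReal.ofReal ((un n z.1 - u z.1 - (un n z.2 - u z.2)) ^ 2 * j z)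
        ∂(μ.prod μ)).toReal := ENNReal.toReal_nonneg
    rw [Real.dist_eq, sub_zero, abs_of_nonneg h3]
    linarith
  -- Step 5: the `τ₀` + `L²` part tends to `0`
  have hACto : Tendsto (fun n =>
      τ₀ (un n - u) (un n - u) + ∫ x, (un n x - u x) ^ 2 ∂μ) atTop (𝓝 0) := by
    have h := hτ₀tend.mul hτ₀tend
    rw [mul_zero] at h
    refine h.congr fun n => ?_
    exact Real.mul_self_sqrt (add_nonneg (haccr _ (hsub _ (hmem n) _ huD₀))
      (integral_nonneg fun x => sq_nonneg _))
  -- combine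
  have hsumto : Tendsto (fun n =>
      (τ₀ (un n - u) (un n - u) + ∫ x, (un n x - u x) ^ 2 ∂μ) +
      (∫⁻ z : Ω × Ω,
        ENNReal.ofReal ((un n z.1 - u z.1 - (un n z.2 - u z.2)) ^ 2 * j z)
        ∂(μ.prod μ)).toReal) atTop (𝓝 0) := by
    have h := hACto.add hBto
    rwa [add_zero] at h
  have hfinal := (Real.continuous_sqrt.tendsto 0).comp hsumto
  simp only [Function.comp_def, Real.sqrt_zero] at hfinal
  refine hfinal.congr fun n => ?_
  congr 1
  ring
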